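/- Define f(u; λ) := u³ + (3/2)·λ·u − (1 + u²)^{3/2} for u, λ ∈ ℝ. Then: (a) for all α < 1/2, all s > 0 and all λ ≥ 0, f(α/s; λ) − f((α − 1)/s; λ) ≥ 3(1 − 2α)/(2s²); and (b) for all α > −1/2, all s ≥ (3(1 + 2α)² + 1)/(5(1 + 2α)) and all λ with 0 ≤ λ ≤ (1 + 2α)/(12s), f(α/s; λ) − f((α + 1)/s; λ) ≥ (1 + 2α)/(8s²). -/

import Mathlib

noncomputable section

/-- The function f(u; λ) := u³ + (3/2)·λ·u − (1 + u²)^{3/2}. -/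
def ff (u lam : ℝ) : ℝ := u ^ 3 + (3 / 2) * lam * u - (1 + u ^ 2) ^ ((3 : ℝ) / 2)

private lemma sq_half_rpow (x : ℝ) : ((1 + x ^ 2) ^ ((1 : ℝ) / 2)) ^ 2 = 1 + x ^ 2 := by
  rw [← Real.rpow_natCast ((1 + x ^ 2) ^ ((1 : ℝ) / 2)) 2, ← Real.rpow_mul (by positivity)]
  norm_num

private lemma phi_deriv (x : ℝ) :
    HasDerivAt (fun u : ℝ => u ^ 3 + 3 / 2 * u ^ 2 - (1 + u ^ 2) ^ ((3 : ℝ) / 2))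
      (3 * x ^ 2 + 3 * x - 3 * x * ((1 + x ^ 2) ^ ((1 : ℝ) / 2))) x := by
  have h1 : HasDerivAt (fun u : ℝ => u ^ 3) (3 * x ^ 2) x := by
    simpa using hasDerivAt_pow 3 x
  have h2 : HasDerivAt (fun u : ℝ => 3 / 2 * u ^ 2) (3 / 2 * (2 * x)) x := by
    simpa using (hasDerivAt_pow 2 x).const_mul (3 / 2 : ℝ)
  have h3 : HasDerivAt (fun u : ℝ => 1 + u ^ 2) (0 + 2 * x) x := by
    simpa using (hasDerivAt_pow 2 x).const_add (1 : ℝ)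
  have h4 := h3.rpow_const (p := (3 : ℝ) / 2) (Or.inr (by norm_num))
  have h5 : ((3 : ℝ) / 2 - 1) = (1 : ℝ) / 2 := by norm_num
  rw [h5] at h4
  refine HasDerivAt.congr_deriv ((h1.add h2).sub h4) ?_
  ring

private lemma phi_mono : Monotone (fun u : ℝ => u ^ 3 + 3 / 2 * u ^ 2 - (1 + u ^ 2) ^ ((3 : ℝ) / 2)) := by
  apply monotone_of_deriv_nonneg
  · exact fun x => (phi_deriv x).differentiableAt
  · intro x
    rw [(phi_deriv x).deriv]
    set sx := (1 + x ^ 2) ^ ((1 : ℝ) / 2) with hsx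
    have hs0 : 0 ≤ sx := Real.rpow_nonneg (by positivity) _
    have hs2 : sx ^ 2 = 1 + x ^ 2 := sq_half_rpow x
    rcases le_total x 0 with hx | hx
    · have hs1 : 1 ≤ sx := by nlinarith
      nlinarith [mul_nonneg (neg_nonneg.2 hx) (sub_nonneg.2 hs1), sq_nonneg x]
    · have hs1 : sx ≤ 1 + x := by nlinarith
      nlinarith [mul_nonneg hx (sub_nonneg.2 hs1)]

private lemma coreTD (t d : ℝ) (ht : 0 < t) (hd : 0 ≤ d) (hc : 3 * t ^ 2 + d ^ 2 ≤ 5 * t) :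
    (3 * t ^ 2 + d ^ 2 + t) * (8 + t ^ 2 + d ^ 2) ≤ 8 * t * (6 + t ^ 2 + d ^ 2) := by
  nlinarith [sq_nonneg d, sq_nonneg t, mul_nonneg ht.le (sub_nonneg.2 hc), sq_nonneg (d * t),
    sq_nonneg (d ^ 2 - t), mul_nonneg (mul_nonneg ht.le ht.le) (sub_nonneg.2 hc),
    mul_nonneg (mul_nonneg hd hd) (sub_nonneg.2 hc)]

private lemma rpow_cube (u : ℝ) : (1 + u ^ 2) ^ ((3 : ℝ) / 2) = ((1 + u ^ 2) ^ ((1 : ℝ) / 2)) ^ 3 := by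
  rw [← Real.rpow_natCast ((1 + u ^ 2) ^ ((1 : ℝ) / 2)) 3, ← Real.rpow_mul (by positivity)]
  norm_num

private lemma coreB (a b : ℝ) (hab : a ≤ b) (ht : 0 < a + b)
    (hcon : 3 * (a + b) ^ 2 + (b - a) ^ 2 ≤ 5 * (a + b)) :
    b ^ 3 + b ^ 2 / 4 - (1 + b ^ 2) ^ ((3 : ℝ) / 2) ≤
      a ^ 3 + a ^ 2 / 4 - (1 + a ^ 2) ^ ((3 : ℝ) / 2) := by
  rw [rpow_cube a, rpow_cube b]
  set p := (1 + a ^ 2) ^ ((1 : ℝ) / 2) with hp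
  set q := (1 + b ^ 2) ^ ((1 : ℝ) / 2) with hq
  have hp0 : 0 ≤ p := Real.rpow_nonneg (by positivity) _
  have hq0 : 0 ≤ q := Real.rpow_nonneg (by positivity) _
  have hp2 : p ^ 2 = 1 + a ^ 2 := sq_half_rpow a
  have hq2 : q ^ 2 = 1 + b ^ 2 := sq_half_rpow b
  have hp1 : 1 ≤ p := by nlinarith
  have hq1 : 1 ≤ q := by nlinarith
  have hpub : p ≤ 1 + a ^ 2 / 2 := by nlinarith
  have hqub : q ≤ 1 + b ^ 2 / 2 := by nlinarith
  have hpq1 : 1 ≤ p * q := one_le_mul_of_one_le_of_one_le hp1 hq1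
  have hd : 0 ≤ b - a := sub_nonneg.2 hab
  -- the three nonneg products
  have hA : 0 ≤ (b - a) * (8 * (a + b) * (6 + (a + b) ^ 2 + (b - a) ^ 2) -
      (3 * (a + b) ^ 2 + (b - a) ^ 2 + (a + b)) * (8 + (a + b) ^ 2 + (b - a) ^ 2)) :=
    mul_nonneg hd (sub_nonneg.2 (coreTD (a + b) (b - a) ht hd hcon))
  have hB : 0 ≤ (b ^ 2 - a ^ 2) * (p * q - 1) := by
    apply mul_nonneg _ (sub_nonneg.2 hpq1)
    nlinarith
  have hC : 0 ≤ ((b - a) * (3 * (a + b) ^ 2 + (b - a) ^ 2 + (a + b))) *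
      ((2 + (a ^ 2 + b ^ 2) / 2) - (p + q)) := by
    apply mul_nonneg (mul_nonneg hd (by nlinarith))
    linarith
  have hkey : (b ^ 3 - a ^ 3 + (b ^ 2 - a ^ 2) / 4) * (p + q) ≤
      (b ^ 2 - a ^ 2) * (2 + a ^ 2 + b ^ 2 + p * q) := by linarith [hA, hB, hC]
  have hid : (q ^ 3 - p ^ 3) * (p + q) = (b ^ 2 - a ^ 2) * (2 + a ^ 2 + b ^ 2 + p * q) := by
    have : (q ^ 3 - p ^ 3) * (p + q) = (q ^ 2 - p ^ 2) * (q ^ 2 + p ^ 2 + p * q) := by ring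
    rw [this, hp2, hq2]; ring
  have hppq : 0 < p + q := by linarith
  have h6 : (b ^ 3 - a ^ 3 + (b ^ 2 - a ^ 2) / 4) * (p + q) ≤ (q ^ 3 - p ^ 3) * (p + q) := by
    rw [hid]; exact hkey
  have h7 := (mul_le_mul_iff_of_pos_right hppq).1 h6
  linarith

theorem statement17 :
    (∀ α : ℝ, α < 1 / 2 → ∀ s : ℝ, 0 < s → ∀ lam : ℝ, 0 ≤ lam →
      3 * (1 - 2 * α) / (2 * s ^ 2) ≤ ff (α / s) lam - ff ((α - 1) / s) lam) ∧
    (∀ α : ℝ, -(1 / 2 : ℝ) < α → ∀ s : ℝ,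
      (3 * (1 + 2 * α) ^ 2 + 1) / (5 * (1 + 2 * α)) ≤ s →
      ∀ lam : ℝ, 0 ≤ lam → lam ≤ (1 + 2 * α) / (12 * s) →
      (1 + 2 * α) / (8 * s ^ 2) ≤ ff (α / s) lam - ff ((α + 1) / s) lam) := by
  constructor
  · intro α hα s hs lam hlam
    have hle : (α - 1) / s ≤ α / s :=
      div_le_div_of_nonneg_right (by linarith) hs.le
    have key := phi_mono hle
    simp only [] at key
    have e2 : 3 * (1 - 2 * α) / (2 * s ^ 2) =
        3 / 2 * (((α - 1) / s) ^ 2 - (α / s) ^ 2) := by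
      field_simp; ring
    have e3 : 3 / 2 * lam * (α / s) - 3 / 2 * lam * ((α - 1) / s) = 3 * lam / (2 * s) := by
      field_simp; ring
    have e4 : 0 ≤ 3 * lam / (2 * s) := by positivity
    simp only [ff]
    linarith [key]
  · intro α hα s hs lam hlam0 hlam1
    have hc : 0 < 1 + 2 * α := by linarith
    have hs0 : 0 < s := lt_of_lt_of_le (by positivity) hs
    have h5 : 3 * (1 + 2 * α) ^ 2 + 1 ≤ 5 * (1 + 2 * α) * s := by
      rw [div_le_iff₀ (by positivity)] at hs
      linarith
    have hab : α / s ≤ (α + 1) / s :=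
      div_le_div_of_nonneg_right (by linarith) hs0.le
    have ht : 0 < α / s + (α + 1) / s := by
      have : α / s + (α + 1) / s = (1 + 2 * α) / s := by field_simp; ring
      rw [this]; positivity
    have hcon : 3 * (α / s + (α + 1) / s) ^ 2 + ((α + 1) / s - α / s) ^ 2 ≤
        5 * (α / s + (α + 1) / s) := by
      rw [← add_div, ← sub_div, div_pow, div_pow, ← mul_div_assoc, ← mul_div_assoc,
        ← add_div, div_le_div_iff₀ (by positivity) hs0]
      nlinarith [sq_nonneg s]
    have key := coreB (α / s) ((α + 1) / s) hab ht hcon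
    have e2 : ((α + 1) / s) ^ 2 - (α / s) ^ 2 = (1 + 2 * α) / s ^ 2 := by
      field_simp; ring
    have e3 : 3 / 2 * lam * (α / s) - 3 / 2 * lam * ((α + 1) / s) = -(3 * lam / (2 * s)) := by
      field_simp; ring
    have e4 : 3 * lam / (2 * s) ≤ (1 + 2 * α) / (8 * s ^ 2) := by
      have h8 : lam * (12 * s) ≤ 1 + 2 * α := (le_div_iff₀ (by positivity)).1 hlam1
      rw [div_le_div_iff₀ (by positivity : (0:ℝ) < 2 * s) (by positivity : (0:ℝ) < 8 * s ^ 2)]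
      nlinarith [mul_le_mul_of_nonneg_right h8 hs0.le]
    have e5 : (1 + 2 * α) / (8 * s ^ 2) = (1 + 2 * α) / s ^ 2 / 4 - (1 + 2 * α) / (8 * s ^ 2) := by
      field_simp; ring
    simp only [ff]
    linarith [key]
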